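/- If G is a multi-GGS group on the m-adic tree defined by a homomorphism ω: D → A_m^{m-1} (constant sequence), ι is an automorphism of D, and α ∈ Norm_{Sym(X)}(A_m) ∩ St_{Sym(X)}(0), then the multi-GGS group defined by p(α) ∘ ω ∘ ι is conjugate to G in Aut T; indeed, the constant-portrait automorphism κ(α) conjugates one to the other up to the adjustment of ι by the power map induced by α on A_m. -/

import Mathlib

/-- A tree automorphism of the `m`-adic tree, identified with the free monoid
`List (Fin m)`: a length-preserving and prefix-preserving bijection. -/
def IsTreeAut {m : ℕ} (f : Equiv.Perm (List (Fin m))) : Prop :=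
  (∀ u : List (Fin m), (f u).length = u.length) ∧
    ∀ u v : List (Fin m), u <+: v → f u <+: f v

/-- `s` is the section of `f` at the vertex `u`: `f (u v) = f(u) s(v)` for all `v`. -/
def HasSectionAt {m : ℕ} (f : Equiv.Perm (List (Fin m))) (u : List (Fin m))
    (s : Equiv.Perm (List (Fin m))) : Prop :=
  ∀ v : List (Fin m), f (u ++ v) = f u ++ s v

/-- `π ∈ Sym(X)` is the label of `f` at the vertex `u`: `f (u x) = f(u) π(x)`. -/
def HasLabelAt {m : ℕ} (f : Equiv.Perm (List (Fin m))) (u : List (Fin m))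
    (π : Equiv.Perm (Fin m)) : Prop :=
  ∀ x : Fin m, f (u ++ [x]) = f u ++ [π x]
def dAux {m : ℕ} (x : Fin m) (ω : ℕ → Fin m → Equiv.Perm (Fin m)) :
    ℕ → List (Fin m) → List (Fin m)
  | _, [] => []
  | _, [y] => [y]
  | k, y :: z :: v => if y = x then y :: dAux x ω (k + 1) (z :: v) else y :: ω k y z :: v

theorem dAux_length {m : ℕ} (x : Fin m) (ω : ℕ → Fin m → Equiv.Perm (Fin m)) :
    ∀ (k : ℕ) (l : List (Fin m)), (dAux x ω k l).length = l.length
  | _, [] => rfl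
  | _, [_] => rfl
  | k, y :: z :: v => by
    by_cases h : y = x
    · simp [dAux, h, dAux_length x ω (k + 1) (z :: v)]
    · simp [dAux, h]

theorem dAux_inv {m : ℕ} (x : Fin m) (ω : ℕ → Fin m → Equiv.Perm (Fin m)) :
    ∀ (k : ℕ) (l : List (Fin m)),
      dAux x (fun k y => (ω k y)⁻¹) k (dAux x ω k l) = l
  | _, [] => rfl
  | _, [_] => rfl
  | k, y :: z :: v => by
    by_cases h : y = x
    · have hlen := dAux_length x ω (k + 1) (z :: v)
      obtain ⟨a, w, hw⟩ : ∃ a w, dAux x ω (k + 1) (z :: v) = a :: w := by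
        cases hl : dAux x ω (k + 1) (z :: v) with
        | nil => rw [hl] at hlen; simp at hlen
        | cons a w => exact ⟨a, w, rfl⟩
      have IH := dAux_inv x ω (k + 1) (z :: v)
      have e1 : dAux x ω k (y :: z :: v) = y :: a :: w := by simp [dAux, h, hw]
      have e2 : dAux x (fun k y => (ω k y)⁻¹) k (y :: a :: w)
          = y :: dAux x (fun k y => (ω k y)⁻¹) (k + 1) (a :: w) := by simp [dAux, h]
      rw [e1, e2, ← hw, IH]
    · simp [dAux, h]

def directedAut {m : ℕ} (x : Fin m) (ω : ℕ → Fin m → Equiv.Perm (Fin m)) :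
    Equiv.Perm (List (Fin m)) where
  toFun := dAux x ω 0
  invFun := dAux x (fun k y => (ω k y)⁻¹) 0
  left_inv l := dAux_inv x ω 0 l
  right_inv l := by
    have h := dAux_inv x (fun k y => (ω k y)⁻¹) 0 l
    simpa [inv_inv] using h

/-- The rooted automorphism induced by `π ∈ Sym(X)`. -/
def rootedAut {m : ℕ} (π : Equiv.Perm (Fin m)) : Equiv.Perm (List (Fin m)) where
  toFun l := match l with
    | [] => []
    | x :: u => π x :: u
  invFun l := match l with
    | [] => []
    | x :: u => π.symm x :: u
  left_inv l := by cases l <;> simp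
  right_inv l := by cases l <;> simp

/-- The multi-GGS group on the `m`-adic tree defined by the (constant) defining
homomorphism `ω`: it is generated by the rooted automorphism `a` with label
`(0 1 ⋯ m−1)` and the directed automorphisms `d_ω` for `d ∈ D`, spine `0̄`. -/
def mGGS {m : ℕ} [NeZero m] {D : Type*} [CommGroup D]
    (ω : D →* (Fin m → Equiv.Perm (Fin m))) : Subgroup (Equiv.Perm (List (Fin m))) :=
  Subgroup.closure
    ({rootedAut (finRotate m)} ∪
      Set.range (fun d : D => directedAut (0 : Fin m) (fun _ y => ω d y)))

/-- The defining homomorphism `p(α) ∘ ω ∘ ι`, where `p(α)` permutes the coordinates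
of `A_m^{X∖{0}}` by `α`. -/
def pOmega {m : ℕ} {D : Type*} [CommGroup D]
    (ω : D →* (Fin m → Equiv.Perm (Fin m))) (ι : D ≃* D) (α : Equiv.Perm (Fin m)) :
    D →* (Fin m → Equiv.Perm (Fin m)) where
  toFun d y := ω (ι d) (α y)
  map_one' := by funext y; simp
  map_mul' a b := by funext y; simp [map_mul, Pi.mul_apply]

section Helpers

/-- The constant-portrait automorphism κ(α). -/
def mapAut {m : ℕ} (α : Equiv.Perm (Fin m)) : Equiv.Perm (List (Fin m)) where
  toFun := List.map α
  invFun := List.map α.symm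
  left_inv l := by simp [List.map_map]
  right_inv l := by simp [List.map_map]

/-- `rootedAut` as a monoid hom. -/
def RA {m : ℕ} : Equiv.Perm (Fin m) →* Equiv.Perm (List (Fin m)) where
  toFun := rootedAut
  map_one' := by
    apply Equiv.ext; intro l; cases l <;> simp [rootedAut]
  map_mul' π σ := by
    apply Equiv.ext; intro l; cases l <;> simp [rootedAut, Equiv.Perm.mul_apply]

theorem conj_rootedAut {m : ℕ} (α π : Equiv.Perm (Fin m)) :
    (mapAut α)⁻¹ * rootedAut π * mapAut α = rootedAut (α⁻¹ * π * α) := by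
  apply Equiv.ext; intro l
  cases l <;>
    simp [mapAut, rootedAut, Equiv.Perm.mul_apply, Equiv.Perm.inv_def, List.map_map]

theorem dAux_map {m : ℕ} [NeZero m] (α : Equiv.Perm (Fin m)) (hα0 : α 0 = 0)
    (Ω : ℕ → Fin m → Equiv.Perm (Fin m)) :
    ∀ (k : ℕ) (l : List (Fin m)),
      List.map α.symm (dAux 0 Ω k (List.map α l))
        = dAux 0 (fun k y => α⁻¹ * Ω k (α y) * α) k l
  | _, [] => rfl
  | _, [y] => by simp [dAux]
  | k, y :: z :: v => by
    have hsymm0 : α.symm 0 = 0 := by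
      conv_lhs => rw [← hα0]
      exact α.symm_apply_apply 0
    by_cases h : y = 0
    · subst h
      have IH := dAux_map α hα0 Ω (k + 1) (z :: v)
      simp only [List.map_cons] at IH ⊢
      rw [hα0]
      show List.map α.symm (dAux 0 Ω k (0 :: α z :: List.map α v)) = _
      rw [show dAux 0 Ω k (0 :: α z :: List.map α v)
            = 0 :: dAux 0 Ω (k + 1) (α z :: List.map α v) by simp [dAux],
          show dAux 0 (fun k y => α⁻¹ * Ω k (α y) * α) k (0 :: z :: v)
            = 0 :: dAux 0 (fun k y => α⁻¹ * Ω k (α y) * α) (k + 1) (z :: v) by simp [dAux]]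
      simp only [List.map_cons, hsymm0, IH]
    · have hαy : α y ≠ 0 := by
        intro hc
        exact h (α.injective (hc.trans hα0.symm))
      simp [dAux, h, hαy, Equiv.Perm.mul_apply, Equiv.Perm.inv_def, List.map_map]

theorem conj_directedAut {m : ℕ} [NeZero m] (α : Equiv.Perm (Fin m)) (hα0 : α 0 = 0)
    (Ω : ℕ → Fin m → Equiv.Perm (Fin m)) :
    (mapAut α)⁻¹ * directedAut 0 Ω * mapAut α
      = directedAut 0 (fun k y => α⁻¹ * Ω k (α y) * α) := by
  apply Equiv.ext; intro l
  have := dAux_map α hα0 Ω 0 l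
  simpa [mapAut, directedAut, Equiv.Perm.mul_apply, Equiv.Perm.inv_def] using this

open Fin.NatCast in
theorem finRotate_pow_apply {n : ℕ} (t : ℕ) (i : Fin (n + 1)) :
    ((finRotate (n + 1)) ^ t) i = i + (t : Fin (n + 1)) := by
  induction t with
  | zero => simp
  | succ t ih =>
    rw [pow_succ', Equiv.Perm.mul_apply, ih, finRotate_succ_apply]
    push_cast
    exact add_assoc _ _ _

open Fin.NatCast in
theorem orderOf_finRotate (m : ℕ) [NeZero m] : orderOf (finRotate m) = m := by
  obtain ⟨n, rfl⟩ := Nat.exists_eq_succ_of_ne_zero (NeZero.ne m)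
  apply Nat.dvd_antisymm
  · apply orderOf_dvd_of_pow_eq_one
    apply Equiv.ext; intro i
    simp [finRotate_pow_apply]
  · have h0 : ((finRotate (n + 1)) ^ orderOf (finRotate (n + 1))) 0 = 0 := by
      rw [pow_orderOf_eq_one]; rfl
    rw [finRotate_pow_apply, zero_add] at h0
    exact (Fin.natCast_eq_zero).1 h0

end Helpers

set_option maxHeartbeats 1000000 in
theorem mGGS_conjugate_of_twist' {m : ℕ} [NeZero m] {D : Type*} [CommGroup D]
    (ω : D →* (Fin m → Equiv.Perm (Fin m)))
    (hω0 : ∀ d : D, ω d 0 = 1)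
    (hωA : ∀ (d : D) (y : Fin m), ω d y ∈ Subgroup.zpowers (finRotate m))
    (hker : ∀ d : D, ω d = 1 → d = 1)
    (hexp : ∀ d : D, d ^ m = 1)
    (ι : D ≃* D) (α : Equiv.Perm (Fin m))
    (hα0 : α 0 = 0)
    (hαN : ∀ π ∈ Subgroup.zpowers (finRotate m),
      α * π * α⁻¹ ∈ Subgroup.zpowers (finRotate m)) :
    ∃ f : Equiv.Perm (List (Fin m)), IsTreeAut f ∧
      Subgroup.map (MulAut.conj f⁻¹).toMonoidHom (mGGS ω) = mGGS (pOmega ω ι α) := by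
  classical
  set ρ := finRotate m with hρdef
  set H := Subgroup.zpowers ρ with hHdef
  have hcard : ∀ e : Equiv.Perm (Fin m) ≃* Equiv.Perm (Fin m),
      Nat.card H ≤ Nat.card (H.map e.toMonoidHom) :=
    fun e => le_of_eq (Nat.card_congr
      (H.equivMapOfInjective e.toMonoidHom e.injective).toEquiv)
  -- extract k with α⁻¹ * ρ * α = ρ ^ k
  have hmap : H.map (MulAut.conj α).toMonoidHom = H := by
    apply Subgroup.eq_of_le_of_card_ge _ (hcard _)
    rintro _ ⟨π, hπ, rfl⟩
    simpa [MulAut.conj_apply] using hαN π hπ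
  have hρmem : ρ ∈ H.map (MulAut.conj α).toMonoidHom := by
    rw [hmap]; exact Subgroup.mem_zpowers ρ
  obtain ⟨π, hπH, hπ⟩ := hρmem
  obtain ⟨k, hk⟩ := Subgroup.mem_zpowers_iff.mp hπH
  have hπ' : α * π * α⁻¹ = ρ := by simpa [MulAut.conj_apply] using hπ
  have hconjρ : α⁻¹ * ρ * α = ρ ^ k := by
    rw [hk, ← hπ']; group
  have key : ∀ t : ℤ, α⁻¹ * ρ ^ t * α = ρ ^ (k * t) := by
    intro t
    have h1 : α⁻¹ * ρ ^ t * α = (α⁻¹ * ρ * α) ^ t := by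
      have := conj_zpow (i := t) (a := α⁻¹) (b := ρ)
      rw [inv_inv] at this
      exact this.symm
    rw [h1, hconjρ, ← zpow_mul]
  -- extract j with ρ ^ (k * j) = ρ
  have hmap2 : H.map (MulAut.conj α⁻¹).toMonoidHom = H := by
    apply Subgroup.eq_of_le_of_card_ge _ (hcard _)
    rintro _ ⟨π₂, hπ₂, rfl⟩
    obtain ⟨t, rfl⟩ := Subgroup.mem_zpowers_iff.mp hπ₂
    have : (MulAut.conj α⁻¹) (ρ ^ t) = ρ ^ (k * t) := by
      rw [MulAut.conj_apply, inv_inv, key]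
    rw [MulEquiv.coe_toMonoidHom, this]
    exact Subgroup.zpow_mem _ (Subgroup.mem_zpowers ρ) _
  have hρmem2 : ρ ∈ H.map (MulAut.conj α⁻¹).toMonoidHom := by
    rw [hmap2]; exact Subgroup.mem_zpowers ρ
  obtain ⟨π₂, hπ₂H, hπ₂⟩ := hρmem2
  obtain ⟨j, rfl⟩ := Subgroup.mem_zpowers_iff.mp hπ₂H
  have hj : ρ ^ (k * j) = ρ := by
    rw [← key j]
    simpa [MulAut.conj_apply, inv_inv] using hπ₂
  -- divisibility and exponent facts
  have hdvd : (m : ℤ) ∣ k * j - 1 := by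
    rw [← orderOf_finRotate m, orderOf_dvd_iff_zpow_eq_one, zpow_sub, zpow_one, hj]
    exact mul_inv_cancel _
  have hpow : ∀ g : D, g ^ (k * j) = g := by
    intro g
    obtain ⟨t, ht⟩ := hdvd
    have h1 : k * j = (m : ℤ) * t + 1 := by rw [← ht]; ring
    rw [h1, zpow_add, zpow_one, zpow_mul, zpow_natCast, hexp g, one_zpow, one_mul]
  -- the conjugating automorphism
  set f := mapAut α with hfdef
  have hRA : ∀ π₀ : Equiv.Perm (Fin m), rootedAut π₀ = RA π₀ := fun _ => rfl
  have hconj_a : (MulAut.conj f⁻¹).toMonoidHom (rootedAut ρ) = rootedAut ρ ^ k := by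
    rw [MulEquiv.coe_toMonoidHom, MulAut.conj_apply, inv_inv, conj_rootedAut,
      hconjρ, hRA, hRA, map_zpow]
  have hconj_d : ∀ d : D,
      (MulAut.conj f⁻¹).toMonoidHom (directedAut (0 : Fin m) (fun _ y => ω d y))
        = directedAut (0 : Fin m) (fun _ y => (pOmega ω ι α) (ι.symm (d ^ k)) y) := by
    intro d
    rw [MulEquiv.coe_toMonoidHom, MulAut.conj_apply, inv_inv, conj_directedAut α hα0]
    congr 1
    funext k' y
    show α⁻¹ * ω d (α y) * α = ω (ι (ι.symm (d ^ k))) (α y)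
    rw [MulEquiv.apply_symm_apply]
    obtain ⟨t, ht⟩ := Subgroup.mem_zpowers_iff.mp (hωA d (α y))
    rw [← ht, key t, mul_comm k t, zpow_mul, ht, map_zpow, Pi.pow_apply]
  refine ⟨f, ⟨fun u => by simp [hfdef, mapAut], ?_⟩, ?_⟩
  · rintro u v ⟨t, rfl⟩
    exact ⟨t.map α, by simp [hfdef, mapAut]⟩
  · rw [mGGS, mGGS, MonoidHom.map_closure]
    apply le_antisymm
    · rw [Subgroup.closure_le]
      rintro _ ⟨g, hg | ⟨d, rfl⟩, rfl⟩
      · rw [Set.mem_singleton_iff] at hg; subst hg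
        rw [hconj_a]
        apply Subgroup.zpow_mem
        apply Subgroup.subset_closure
        exact Set.mem_union_left _ rfl
      · rw [hconj_d]
        apply Subgroup.subset_closure
        exact Set.mem_union_right _ ⟨ι.symm (d ^ k), rfl⟩
    · rw [Subgroup.closure_le]
      rintro g (hg | ⟨d, rfl⟩)
      · rw [Set.mem_singleton_iff] at hg; subst hg
        have ha : rootedAut ρ
            = ((MulAut.conj f⁻¹).toMonoidHom (rootedAut ρ)) ^ j := by
          rw [hconj_a, ← zpow_mul, hRA, ← map_zpow, hj]
        nth_rewrite 2 [ha]
        apply Subgroup.zpow_mem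
        apply Subgroup.subset_closure
        apply Set.mem_image_of_mem
        exact Set.mem_union_left _ rfl
      · have he : ι.symm (((ι d) ^ j) ^ k) = d := by
          rw [← zpow_mul, mul_comm j k, hpow, MulEquiv.symm_apply_apply]
        have hd : directedAut (0 : Fin m) (fun _ y => (pOmega ω ι α) d y)
            = (MulAut.conj f⁻¹).toMonoidHom
                (directedAut (0 : Fin m) (fun _ y => ω ((ι d) ^ j) y)) := by
          rw [hconj_d, he]
        show directedAut (0 : Fin m) (fun _ y => (pOmega ω ι α) d y) ∈ _
        rw [hd]
        apply Subgroup.subset_closure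
        apply Set.mem_image_of_mem
        exact Set.mem_union_right _ ⟨(ι d) ^ j, rfl⟩

/-- Sufficiency for multi-GGS groups to be conjugate: if `ι` is an automorphism of
`D` and `α ∈ Norm_{Sym(X)}(A_m) ∩ St_{Sym(X)}(0)`, then the multi-GGS group defined
by `p(α) ∘ ω ∘ ι` is conjugate in `Aut T` to the one defined by `ω`. -/
theorem mGGS_conjugate_of_twist {m : ℕ} [NeZero m] {D : Type*} [CommGroup D]
    (ω : D →* (Fin m → Equiv.Perm (Fin m)))
    (hω0 : ∀ d : D, ω d 0 = 1)
    (hωA : ∀ (d : D) (y : Fin m), ω d y ∈ Subgroup.zpowers (finRotate m))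
    (hker : ∀ d : D, ω d = 1 → d = 1)
    (hexp : ∀ d : D, d ^ m = 1)
    (ι : D ≃* D) (α : Equiv.Perm (Fin m))
    (hα0 : α 0 = 0)
    (hαN : ∀ π ∈ Subgroup.zpowers (finRotate m),
      α * π * α⁻¹ ∈ Subgroup.zpowers (finRotate m)) :
    ∃ f : Equiv.Perm (List (Fin m)), IsTreeAut f ∧
      Subgroup.map (MulAut.conj f⁻¹).toMonoidHom (mGGS ω) = mGGS (pOmega ω ι α) := by
  exact mGGS_conjugate_of_twist' ω hω0 hωA hker hexp ι α hα0 hαN
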